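/- Suppose F = {w : h_j(w) ≤ 0, j=1,…,r} is convex and the Slater condition holds. Let y ∈ F, let J ⊆ {1,…,r} be a nonempty set of indices with h_j(y) = 0 for j ∈ J, and let λ_j > 0 for j ∈ J satisfy Σ_{j∈J} λ_j ∇h_j(y) = 0. If y₀ satisfies h_j(y₀) < 0 for all j and ρ > 0 is such that h_j(w) < 0 for all j whenever ‖w - y₀‖ ≤ ρ, then ∇h_j(y)ᵀ(w - y) ≤ 0 for every w with ‖w - y₀‖ ≤ ρ and every j ∈ J, and consequently ∇h_j(y) = 0 for all j ∈ J. -/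

import Mathlib

open Set

theorem stmt8 {m r : ℕ}
    (h : Fin r → EuclideanSpace ℝ (Fin m) → ℝ)
    (hsmooth : ∀ j, ContDiff ℝ 1 (h j))
    (F : Set (EuclideanSpace ℝ (Fin m)))
    (hFdef : F = {w | ∀ j, h j w ≤ 0})
    (hFconv : Convex ℝ F)
    (y : EuclideanSpace ℝ (Fin m)) (hy : y ∈ F)
    (J : Finset (Fin r)) (hJne : J.Nonempty)
    (hact : ∀ j ∈ J, h j y = 0)
    (lam : Fin r → ℝ) (hlam : ∀ j ∈ J, 0 < lam j)
    (hsum : ∑ j ∈ J, lam j • gradient (h j) y = 0)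
    (y₀ : EuclideanSpace ℝ (Fin m)) (hy₀ : ∀ j, h j y₀ < 0)
    (ρ : ℝ) (hρ : 0 < ρ)
    (hball : ∀ w : EuclideanSpace ℝ (Fin m), ‖w - y₀‖ ≤ ρ → ∀ j, h j w < 0) :
    (∀ w : EuclideanSpace ℝ (Fin m), ‖w - y₀‖ ≤ ρ → ∀ j ∈ J,
      (inner ℝ (gradient (h j) y) (w - y) : ℝ) ≤ 0) ∧
    ∀ j ∈ J, gradient (h j) y = 0 := by
  have hdiff : ∀ j, DifferentiableAt ℝ (h j) y :=
    fun j => ((hsmooth j).differentiable one_ne_zero).differentiableAt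
  have hgradf : ∀ j (v : EuclideanSpace ℝ (Fin m)),
      fderiv ℝ (h j) y v = (inner ℝ (gradient (h j) y) v : ℝ) := by
    intro j v
    have := (hdiff j).hasGradientAt.hasFDerivAt
    rw [this.fderiv]
    simp
  have key : ∀ w : EuclideanSpace ℝ (Fin m), ‖w - y₀‖ ≤ ρ → ∀ j ∈ J,
      (inner ℝ (gradient (h j) y) (w - y) : ℝ) ≤ 0 := by
    intro w hw j hj
    have hwF : w ∈ F := by
      rw [hFdef]; exact fun i => (hball w hw i).le
    have hmax : IsLocalMaxOn (h j) F y := by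
      apply IsMaxOn.localize
      intro x hx
      simp only [mem_setOf_eq]
      rw [hact j hj]
      rw [hFdef] at hx
      exact hx j
    have hcone : w - y ∈ posTangentConeAt F y :=
      sub_mem_posTangentConeAt_of_segment_subset (hFconv.segment_subset hy hwF)
    have := hmax.hasFDerivWithinAt_nonpos ((hdiff j).hasFDerivAt.hasFDerivWithinAt) hcone
    rwa [hgradf j (w - y)] at this
  refine ⟨key, ?_⟩
  -- For each w in the ball, the inner products are all zero
  have hzero : ∀ w : EuclideanSpace ℝ (Fin m), ‖w - y₀‖ ≤ ρ → ∀ j ∈ J,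
      (inner ℝ (gradient (h j) y) (w - y) : ℝ) = 0 := by
    intro w hw
    have hsum0 : ∑ j ∈ J, lam j * (inner ℝ (gradient (h j) y) (w - y) : ℝ) = 0 := by
      have h0 : (inner ℝ (∑ j ∈ J, lam j • gradient (h j) y) (w - y) : ℝ) = 0 := by
        rw [hsum]; exact inner_zero_left _
      rw [sum_inner] at h0
      rw [← h0]
      exact Finset.sum_congr rfl fun j _ => (real_inner_smul_left _ _ _).symm
    have hnonpos : ∀ j ∈ J, lam j * (inner ℝ (gradient (h j) y) (w - y) : ℝ) ≤ 0 :=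
      fun j hj => mul_nonpos_of_nonneg_of_nonpos (hlam j hj).le (key w hw j hj)
    intro j hj
    have := (Finset.sum_eq_zero_iff_of_nonpos hnonpos).mp hsum0 j hj
    rcases mul_eq_zero.mp this with h1 | h2
    · exact absurd h1 (ne_of_gt (hlam j hj))
    · exact h2
  intro j hj
  by_contra hne
  set g := gradient (h j) y with hg
  have hgn : 0 < ‖g‖ := norm_pos_iff.mpr hne
  -- take w = y₀ + (ρ/‖g‖) • g
  set w := y₀ + (ρ / ‖g‖) • g with hw
  have hwball : ‖w - y₀‖ ≤ ρ := by
    rw [hw, add_sub_cancel_left, norm_smul]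
    rw [Real.norm_eq_abs, abs_of_pos (div_pos hρ hgn), div_mul_cancel₀ _ (ne_of_gt hgn)]
  have h1 : (inner ℝ g (w - y) : ℝ) = 0 := hzero w hwball j hj
  have h2 : (inner ℝ g (y₀ - y) : ℝ) = 0 := by
    apply hzero y₀ _ j hj
    simp [hρ.le]
  have h3 : (inner ℝ g (w - y₀) : ℝ) = 0 := by
    have : w - y₀ = (w - y) - (y₀ - y) := by abel
    rw [this, inner_sub_right, h1, h2, sub_zero]
  rw [hw, add_sub_cancel_left, real_inner_smul_right, real_inner_self_eq_norm_sq] at h3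
  have : ρ / ‖g‖ * ‖g‖ ^ 2 > 0 := by positivity
  linarith
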